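/- Let Y be a Banach space with an ℓᵖ decomposition Y₁,...,Yₙ and projections D₁,...,Dₙ (set D₀ = D_{n+1} = 0). Let T₁,...,T_{n+1} ∈ B(Y) with T₁ = T₂ and TᵢYⱼ ⊆ Y_{j−1} + Yⱼ + Y_{j+1} for all i, j ∈ {1,...,n} (Y₀ = Y_{n+1} = {0}). Then ‖∑_{j=1}^{n} DⱼTⱼ − ∑_{j=1}^{n} TⱼDⱼ‖ ≤ 3·sup_{2≤j≤n}(‖(T_{j−1}−Tⱼ)Dⱼ‖ + ‖(T_{j+1}−Tⱼ)Dⱼ‖). -/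

import Mathlib

/-- Let `Y` have an ℓᵖ decomposition `Y₁,...,Yₙ` with projections `D₁,...,Dₙ`
(`D₀ = D_{n+1} = 0`), and let `T₁,...,T_{n+1}` be operators with `T₁ = T₂` and each `Tᵢ`
block-tridiagonal (`TᵢYⱼ ⊆ Y_{j−1}+Yⱼ+Y_{j+1}`, i.e. `D_k Tᵢ D_j = 0` for `|k−j| > 1`),
for `i, j ∈ {1,...,n}`. Then
`‖∑ⱼ DⱼTⱼ − ∑ⱼ TⱼDⱼ‖ ≤ 3·sup_{2≤j≤n}(‖(T_{j−1}−Tⱼ)Dⱼ‖ + ‖(T_{j+1}−Tⱼ)Dⱼ‖)`,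
phrased via an arbitrary upper bound `Cb` of that family. -/
theorem stmt19 (p : ℝ) (hp : 1 < p)
    (Y : Type) [NormedAddCommGroup Y] [NormedSpace ℂ Y]
    (n : ℕ) (hn : 1 ≤ n)
    (D : ℕ → (Y →L[ℂ] Y))
    (hD0 : ∀ j, (j = 0 ∨ n < j) → D j = 0)
    (hsum : ∀ x : Y, ∑ j ∈ Finset.Icc 1 n, D j x = x)
    (horth : ∀ j k, j ≠ k → D j ∘L D k = 0)
    (hnorm : ∀ x : Y, ‖x‖ ^ p = ∑ j ∈ Finset.Icc 1 n, ‖D j x‖ ^ p)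
    (T : ℕ → (Y →L[ℂ] Y))
    (hT12 : T 1 = T 2)
    (htri : ∀ i ∈ Finset.Icc 1 n, ∀ j ∈ Finset.Icc 1 n, ∀ k : ℕ,
      (k + 1 < j ∨ j + 1 < k) → D k ∘L (T i ∘L D j) = 0) :
    ∀ Cb : ℝ, 0 ≤ Cb →
      (∀ j, 2 ≤ j → j ≤ n →
        ‖(T (j - 1) - T j) ∘L D j‖ + ‖(T (j + 1) - T j) ∘L D j‖ ≤ Cb) →
      ‖(∑ j ∈ Finset.Icc 1 n, D j ∘L T j) - ∑ j ∈ Finset.Icc 1 n, T j ∘L D j‖ ≤ 3 * Cb := by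
  intro Cb hCb hCbB
  set S : Y →L[ℂ] Y :=
    (∑ j ∈ Finset.Icc 1 n, D j ∘L T j) - ∑ j ∈ Finset.Icc 1 n, T j ∘L D j with hSdef
  have hp0 : (0:ℝ) < p := lt_trans one_pos hp
  -- orthogonality pointwise
  have hDD : ∀ j k (x : Y), j ≠ k → D j (D k x) = 0 := by
    intro j k x h
    have := DFunLike.congr_fun (horth j k h) x
    simpa using this
  -- idempotency
  have hidem : ∀ j (x : Y), D j (D j x) = D j x := by
    intro j x
    by_cases hj : j ∈ Finset.Icc 1 n
    · have h := hsum (D j x)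
      rw [Finset.sum_eq_single_of_mem j hj (fun k _ hk => hDD k j x hk)] at h
      exact h
    · have : D j = 0 := hD0 j (by simp only [Finset.mem_Icc] at hj; omega)
      simp [this]
  -- contraction
  have hDle : ∀ k (x : Y), ‖D k x‖ ≤ ‖x‖ := by
    intro k x
    by_cases hk : k ∈ Finset.Icc 1 n
    · by_contra h
      push_neg at h
      have h2 : ‖x‖ ^ p < ‖D k x‖ ^ p := Real.rpow_lt_rpow (norm_nonneg x) h hp0
      have h3 : ‖D k x‖ ^ p ≤ ‖x‖ ^ p := by
        rw [hnorm x]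
        exact Finset.single_le_sum (f := fun j => ‖D j x‖ ^ p)
          (fun i _ => Real.rpow_nonneg (norm_nonneg _) p) hk
      linarith
    · have : D k = 0 := hD0 k (by simp only [Finset.mem_Icc] at hk; omega)
      simp [this]
  have htri' : ∀ i ∈ Finset.Icc 1 n, ∀ j ∈ Finset.Icc 1 n, ∀ k : ℕ, ∀ x : Y,
      (k + 1 < j ∨ j + 1 < k) → D k (T i (D j x)) = 0 := by
    intro i hi j hj k x hk
    have := DFunLike.congr_fun (htri i hi j hj k hk) x
    simpa using this
  -- key computation of S (D j x)
  have hSDj : ∀ j ∈ Finset.Icc 1 n, ∀ x : Y,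
      S (D j x) = D (j-1) ((T (j-1) - T j) (D j x)) + D (j+1) ((T (j+1) - T j) (D j x)) := by
    intro j hj x
    have hj' := Finset.mem_Icc.mp hj
    have h1 : S (D j x) = (∑ i ∈ Finset.Icc 1 n, D i (T i (D j x)))
        - ∑ i ∈ Finset.Icc 1 n, T i (D i (D j x)) := by
      simp [hSdef, ContinuousLinearMap.sum_apply]
    have h2 : ∑ i ∈ Finset.Icc 1 n, T i (D i (D j x)) = T j (D j x) := by
      rw [Finset.sum_eq_single_of_mem j hj]
      · rw [hidem]
      · intro i _ hi
        rw [hDD i j x hi, map_zero]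
    have h3 : T j (D j x) = ∑ i ∈ Finset.Icc 1 n, D i (T j (D j x)) := (hsum _).symm
    have h4 : S (D j x) = ∑ i ∈ Finset.Icc 1 n, D i ((T i - T j) (D j x)) := by
      rw [h1, h2, h3, ← Finset.sum_sub_distrib]
      refine Finset.sum_congr rfl (fun i _ => ?_)
      rw [ContinuousLinearMap.sub_apply, map_sub]
    -- each term vanishes away from {j-1, j+1}
    have hzero : ∀ i, i ≠ j - 1 → i ≠ j + 1 → D i ((T i - T j) (D j x)) = 0 := by
      intro i hi1 hi2
      by_cases hij : i = j
      · subst hij; simp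
      by_cases hiI : i ∈ Finset.Icc 1 n
      · have hi' := Finset.mem_Icc.mp hiI
        have hcase : i + 1 < j ∨ j + 1 < i := by omega
        rw [ContinuousLinearMap.sub_apply, map_sub,
          htri' i hiI j hj i x hcase, htri' j hj j hj i x hcase, sub_zero]
      · have : D i = 0 := hD0 i (by simp only [Finset.mem_Icc] at hiI; omega)
        simp [this]
    have e1 : ∑ i ∈ Finset.Icc 1 n, D i ((T i - T j) (D j x))
        = ∑ i ∈ Finset.Icc 0 (n+1), D i ((T i - T j) (D j x)) := by
      refine Finset.sum_subset (fun i hi => ?_) (fun i hi hi2 => ?_)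
      · simp only [Finset.mem_Icc] at hi ⊢; omega
      · simp only [Finset.mem_Icc] at hi hi2
        have : D i = 0 := hD0 i (by omega)
        simp [this]
    have e2 : ∑ i ∈ ({j-1, j+1} : Finset ℕ), D i ((T i - T j) (D j x))
        = ∑ i ∈ Finset.Icc 0 (n+1), D i ((T i - T j) (D j x)) := by
      refine Finset.sum_subset (fun i hi => ?_) (fun i hi hi2 => ?_)
      · simp only [Finset.mem_insert, Finset.mem_singleton] at hi
        simp only [Finset.mem_Icc]; omega
      · simp only [Finset.mem_insert, Finset.mem_singleton] at hi2
        push_neg at hi2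
        exact hzero i hi2.1 hi2.2
    have hne : j - 1 ≠ j + 1 := by omega
    rw [h4, e1, ← e2, Finset.sum_pair hne]
  -- norm bound on S ∘ D j, all j
  have hSDnorm : ∀ j (x : Y), ‖S (D j x)‖ ≤ Cb * ‖D j x‖ := by
    intro j x
    by_cases hj : j ∈ Finset.Icc 1 n
    · have hj' := Finset.mem_Icc.mp hj
      rw [hSDj j hj x]
      by_cases hj1 : j = 1
      · subst hj1
        have hd0 : D (1-1) = 0 := hD0 0 (Or.inl rfl)
        have ht : T (1+1) - T 1 = 0 := by rw [← hT12]; simp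
        simp only [hd0, ht]
        simp [mul_nonneg hCb (norm_nonneg _)]
      · have hj2 : 2 ≤ j := by omega
        have key := hCbB j hj2 hj'.2
        have b1 : ‖D (j-1) ((T (j-1) - T j) (D j x))‖ ≤ ‖(T (j-1) - T j) ∘L D j‖ * ‖D j x‖ := by
          refine le_trans (hDle _ _) ?_
          have : (T (j-1) - T j) (D j x) = ((T (j-1) - T j) ∘L D j) (D j x) := by
            rw [ContinuousLinearMap.comp_apply, hidem]
          rw [this]
          exact ContinuousLinearMap.le_opNorm _ _
        have b2 : ‖D (j+1) ((T (j+1) - T j) (D j x))‖ ≤ ‖(T (j+1) - T j) ∘L D j‖ * ‖D j x‖ := by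
          refine le_trans (hDle _ _) ?_
          have : (T (j+1) - T j) (D j x) = ((T (j+1) - T j) ∘L D j) (D j x) := by
            rw [ContinuousLinearMap.comp_apply, hidem]
          rw [this]
          exact ContinuousLinearMap.le_opNorm _ _
        calc ‖D (j-1) ((T (j-1) - T j) (D j x)) + D (j+1) ((T (j+1) - T j) (D j x))‖
            ≤ ‖D (j-1) ((T (j-1) - T j) (D j x))‖ + ‖D (j+1) ((T (j+1) - T j) (D j x))‖ :=
              norm_add_le _ _
          _ ≤ ‖(T (j-1) - T j) ∘L D j‖ * ‖D j x‖ + ‖(T (j+1) - T j) ∘L D j‖ * ‖D j x‖ :=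
              add_le_add b1 b2
          _ = (‖(T (j-1) - T j) ∘L D j‖ + ‖(T (j+1) - T j) ∘L D j‖) * ‖D j x‖ := by ring
          _ ≤ Cb * ‖D j x‖ := mul_le_mul_of_nonneg_right key (norm_nonneg _)
    · have : D j = 0 := hD0 j (by simp only [Finset.mem_Icc] at hj; omega)
      simp [this, mul_nonneg hCb (norm_nonneg _)]
  -- main estimate
  show ‖S‖ ≤ 3 * Cb
  refine ContinuousLinearMap.opNorm_le_bound S (by positivity) (fun x => ?_)
  set P : Y := ∑ j ∈ Finset.Icc 1 n, D (j-1) (S (D j x)) with hP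
  set Q : Y := ∑ j ∈ Finset.Icc 1 n, D (j+1) (S (D j x)) with hQ
  have hsplit : S x = P + Q := by
    have hx : S x = ∑ j ∈ Finset.Icc 1 n, S (D j x) := by
      conv_lhs => rw [← hsum x, map_sum]
    rw [hx, hP, hQ, ← Finset.sum_add_distrib]
    refine Finset.sum_congr rfl (fun j hj => ?_)
    have hj' := Finset.mem_Icc.mp hj
    have hkey := hSDj j hj x
    have hne : j - 1 ≠ j + 1 := by omega
    rw [hkey, map_add, map_add, hidem, hDD (j-1) (j+1) _ hne,
      hDD (j+1) (j-1) _ hne.symm, hidem, add_zero, zero_add]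
  -- blockwise bounds
  have hPk : ∀ k ∈ Finset.Icc 1 n, ‖D k P‖ ≤ Cb * ‖D (k+1) x‖ := by
    intro k hk
    have hDkP : D k P = D k (S (D (k+1) x)) := by
      rw [hP, map_sum]
      rw [Finset.sum_eq_single (k+1)]
      · by_cases h : k + 1 ∈ Finset.Icc 1 n
        · rw [show k + 1 - 1 = k from rfl, hidem]
        · have : D (k+1) = 0 := hD0 (k+1) (by simp only [Finset.mem_Icc] at h; omega)
          simp [this]
      · intro j hj hjne
        have hj' := Finset.mem_Icc.mp hj
        exact hDD k (j-1) _ (by omega)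
      · intro h
        have : D (k+1) = 0 := hD0 (k+1) (by simp only [Finset.mem_Icc] at h; omega)
        simp [this]
    rw [hDkP]
    exact le_trans (hDle _ _) (hSDnorm (k+1) x)
  have hQk : ∀ k ∈ Finset.Icc 1 n, ‖D k Q‖ ≤ Cb * ‖D (k-1) x‖ := by
    intro k hk
    have hk' := Finset.mem_Icc.mp hk
    have hDkQ : D k Q = D k (S (D (k-1) x)) := by
      rw [hQ, map_sum]
      rw [Finset.sum_eq_single (k-1)]
      · rw [show k - 1 + 1 = k by omega, hidem]
      · intro j hj hjne
        exact hDD k (j+1) _ (by omega)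
      · intro h
        simp only [Finset.mem_Icc] at h
        have h1 : k = 1 := by omega
        have : D (k-1) = 0 := by rw [h1]; exact hD0 0 (Or.inl rfl)
        simp [this]
    rw [hDkQ]
    exact le_trans (hDle _ _) (hSDnorm (k-1) x)
  -- ℓᵖ summation argument
  have hgzero : ∀ j, j ∉ Finset.Icc 1 n → ‖D j x‖ ^ p = 0 := by
    intro j hj
    have : D j = 0 := hD0 j (by simp only [Finset.mem_Icc] at hj; omega)
    simp [this, Real.zero_rpow (ne_of_gt hp0)]
  have hext : ∑ j ∈ Finset.Icc 0 (n+1), ‖D j x‖ ^ p = ∑ j ∈ Finset.Icc 1 n, ‖D j x‖ ^ p := by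
    symm
    refine Finset.sum_subset (fun i hi => ?_) (fun i _ hi2 => hgzero i hi2)
    simp only [Finset.mem_Icc] at hi ⊢; omega
  have hshift1 : ∑ k ∈ Finset.Icc 1 n, ‖D (k+1) x‖ ^ p ≤ ∑ j ∈ Finset.Icc 1 n, ‖D j x‖ ^ p := by
    rw [← hext]
    have himg : ∑ k ∈ Finset.Icc 1 n, ‖D (k+1) x‖ ^ p
        = ∑ j ∈ (Finset.Icc 1 n).image (· + 1), ‖D j x‖ ^ p := by
      rw [Finset.sum_image (fun a _ b _ h => by omega)]
    rw [himg]
    refine Finset.sum_le_sum_of_subset_of_nonneg (fun i hi => ?_)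
      (fun i _ _ => Real.rpow_nonneg (norm_nonneg _) p)
    simp only [Finset.mem_image, Finset.mem_Icc] at hi ⊢
    omega
  have hshift2 : ∑ k ∈ Finset.Icc 1 n, ‖D (k-1) x‖ ^ p ≤ ∑ j ∈ Finset.Icc 1 n, ‖D j x‖ ^ p := by
    rw [← hext]
    have himg : ∑ k ∈ Finset.Icc 1 n, ‖D (k-1) x‖ ^ p
        = ∑ j ∈ (Finset.Icc 1 n).image (· - 1), ‖D j x‖ ^ p := by
      rw [Finset.sum_image (fun a ha b hb h => by
        simp only [Finset.coe_Icc, Set.mem_Icc, Finset.mem_coe, Finset.mem_Icc] at ha hb; omega)]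
    rw [himg]
    refine Finset.sum_le_sum_of_subset_of_nonneg (fun i hi => ?_)
      (fun i _ _ => Real.rpow_nonneg (norm_nonneg _) p)
    simp only [Finset.mem_image, Finset.mem_Icc] at hi ⊢
    omega
  have hblock : ∀ (z : Y) (m : ℕ → ℕ),
      (∀ k ∈ Finset.Icc 1 n, ‖D k z‖ ≤ Cb * ‖D (m k) x‖) →
      (∑ k ∈ Finset.Icc 1 n, ‖D (m k) x‖ ^ p ≤ ∑ j ∈ Finset.Icc 1 n, ‖D j x‖ ^ p) →
      ‖z‖ ≤ Cb * ‖x‖ := by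
    intro z m hbd hsum'
    have hle : ‖z‖ ^ p ≤ (Cb * ‖x‖) ^ p := by
      calc ‖z‖ ^ p = ∑ k ∈ Finset.Icc 1 n, ‖D k z‖ ^ p := hnorm z
        _ ≤ ∑ k ∈ Finset.Icc 1 n, (Cb * ‖D (m k) x‖) ^ p :=
            Finset.sum_le_sum (fun k hk =>
              Real.rpow_le_rpow (norm_nonneg _) (hbd k hk) (le_of_lt hp0))
        _ = ∑ k ∈ Finset.Icc 1 n, Cb ^ p * ‖D (m k) x‖ ^ p := by
            refine Finset.sum_congr rfl (fun k _ => ?_)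
            rw [Real.mul_rpow hCb (norm_nonneg _)]
        _ = Cb ^ p * ∑ k ∈ Finset.Icc 1 n, ‖D (m k) x‖ ^ p := by
            rw [Finset.mul_sum]
        _ ≤ Cb ^ p * ∑ j ∈ Finset.Icc 1 n, ‖D j x‖ ^ p :=
            mul_le_mul_of_nonneg_left hsum' (Real.rpow_nonneg hCb p)
        _ = Cb ^ p * ‖x‖ ^ p := by rw [← hnorm x]
        _ = (Cb * ‖x‖) ^ p := (Real.mul_rpow hCb (norm_nonneg x)).symm
    by_contra h
    push_neg at h
    have := Real.rpow_lt_rpow (mul_nonneg hCb (norm_nonneg x)) h hp0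
    linarith
  have hPle : ‖P‖ ≤ Cb * ‖x‖ := hblock P (fun k => k + 1) hPk hshift1
  have hQle : ‖Q‖ ≤ Cb * ‖x‖ := hblock Q (fun k => k - 1) hQk hshift2
  calc ‖S x‖ = ‖P + Q‖ := by rw [hsplit]
    _ ≤ ‖P‖ + ‖Q‖ := norm_add_le _ _
    _ ≤ Cb * ‖x‖ + Cb * ‖x‖ := add_le_add hPle hQle
    _ ≤ 3 * Cb * ‖x‖ := by nlinarith [norm_nonneg x, mul_nonneg hCb (norm_nonneg x)]
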